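/- Suppose gₙ : [0, Tₙ] → ℝ satisfies gₙ(s) ≥ A₁/(1+A₂Bs) with A₁, A₂, B > 0, Tₙ → +∞, and I : (0,∞) → ℝ is nonnegative and increasing with ∫₀^δ I(y)/y² dy = +∞ for some δ > 0. Then ∫₀^{Tₙ} I(gₙ(s)) ds → +∞ as n → ∞. (Consequently the condition 1 + α₀∫₀^{Tₙ} I(g(s))ds = 0 with α₀ < 0 bounded away from 0 forces Tₙ to be bounded.) -/

import Mathlib

open Set Filter intervalIntegral MeasureTheory Topology

lemma aux_image (A₁ c : ℝ) (hA₁ : 0 < A₁) (hc : 0 < c) (T : ℝ) (hT : 0 < T) :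
    (fun s => A₁ / (1 + c * s)) '' Set.Ioc 0 T = Set.Ico (A₁ / (1 + c * T)) A₁ := by
  have hdenT : 0 < 1 + c * T := by nlinarith
  ext y
  constructor
  · rintro ⟨s, ⟨hs0, hsT⟩, rfl⟩
    have hden : 0 < 1 + c * s := by nlinarith
    constructor
    · have h1 : c * s ≤ c * T := mul_le_mul_of_nonneg_left hsT hc.le
      show A₁ / (1 + c * T) ≤ A₁ / (1 + c * s)
      gcongr
    · show A₁ / (1 + c * s) < A₁
      exact div_lt_self hA₁ (by nlinarith)
  · rintro ⟨hy1, hy2⟩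
    have hy0 : 0 < y := lt_of_lt_of_le (div_pos hA₁ hdenT) hy1
    refine ⟨(A₁ / y - 1) / c, ⟨?_, ?_⟩, ?_⟩
    · have : 1 < A₁ / y := (one_lt_div hy0).2 hy2
      exact div_pos (by linarith) hc
    · have h1 : A₁ ≤ y * (1 + c * T) := by
        have := (div_le_iff₀ hdenT).1 hy1
        linarith
      have h2 : A₁ / y ≤ 1 + c * T := (div_le_iff₀ hy0).2 (by linarith)
      rw [div_le_iff₀ hc]
      linarith
    · have h1 : 1 + c * ((A₁ / y - 1) / c) = A₁ / y := by field_simp; ring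
      simp only [h1]
      rw [div_div_eq_mul_div, mul_comm, mul_div_assoc, div_self hA₁.ne', mul_one]

lemma aux_inj (A₁ c : ℝ) (hA₁ : 0 < A₁) (hc : 0 < c) (T : ℝ) :
    Set.InjOn (fun s => A₁ / (1 + c * s)) (Set.Ioc 0 T) := by
  intro a ha b hb hab
  have h1 : 0 < 1 + c * a := by nlinarith [ha.1]
  have h2 : 0 < 1 + c * b := by nlinarith [hb.1]
  simp only at hab
  rw [div_eq_div_iff h1.ne' h2.ne'] at hab
  have h3 : 1 + c * b = 1 + c * a := mul_left_cancel₀ hA₁.ne' hab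
  have h4 : c * a = c * b := by linarith
  exact mul_left_cancel₀ hc.ne' h4

lemma aux_cov (A₁ c : ℝ) (hA₁ : 0 < A₁) (hc : 0 < c) (I : ℝ → ℝ) (T : ℝ) (hT : 0 < T)
    (hφ : MeasureTheory.IntegrableOn (fun s => I (A₁ / (1 + c * s))) (Set.Ioc 0 T)) :
    MeasureTheory.IntegrableOn (fun y => I y / y ^ 2) (Set.Ico (A₁ / (1 + c * T)) A₁) ∧
    ∫ y in Set.Ico (A₁ / (1 + c * T)) A₁, I y / y ^ 2 =
      (c / A₁) * ∫ s in Set.Ioc 0 T, I (A₁ / (1 + c * s)) := by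
  set f : ℝ → ℝ := fun s => A₁ / (1 + c * s) with hf_def
  set f' : ℝ → ℝ := fun s => -(A₁ * c) / (1 + c * s) ^ 2 with hf'_def
  have hders : ∀ s ∈ Set.Ioc (0:ℝ) T, HasDerivWithinAt f (f' s) (Set.Ioc 0 T) s := by
    intro s hs
    have hden : 0 < 1 + c * s := by nlinarith [hs.1]
    have h1 : HasDerivAt (fun s : ℝ => 1 + c * s) c s := by
      simpa using ((hasDerivAt_id s).const_mul c).const_add 1
    have h2 : HasDerivAt (fun s : ℝ => (1 + c * s)⁻¹) (-c / (1 + c * s) ^ 2) s :=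
      h1.inv hden.ne'
    have h3 : HasDerivAt f (-(A₁ * c) / (1 + c * s) ^ 2) s := by
      have := h2.const_mul A₁
      simp only [hf_def, div_eq_mul_inv]
      exact this.congr_deriv (by ring)
    exact h3.hasDerivWithinAt
  have hinj := aux_inj A₁ c hA₁ hc T
  have himg := aux_image A₁ c hA₁ hc T hT
  have heq : ∀ s ∈ Set.Ioc (0:ℝ) T,
      |f' s| • (I (f s) / (f s) ^ 2) = (c / A₁) * I (f s) := by
    intro s hs
    have hden : (0:ℝ) < 1 + c * s := by nlinarith [hs.1]
    have hfs : f s = A₁ / (1 + c * s) := rfl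
    have habs : |f' s| = (A₁ * c) / (1 + c * s) ^ 2 := by
      simp only [hf'_def]
      rw [abs_div, abs_neg, abs_of_nonneg (by positivity : (0:ℝ) ≤ A₁ * c),
        abs_of_nonneg (by positivity : (0:ℝ) ≤ (1 + c * s) ^ 2)]
    rw [smul_eq_mul, habs, hfs]
    field_simp
  have hintR : MeasureTheory.IntegrableOn (fun s => |f' s| • (I (f s) / (f s) ^ 2))
      (Set.Ioc 0 T) := by
    have h1 : MeasureTheory.IntegrableOn (fun s => (c / A₁) * I (f s)) (Set.Ioc 0 T) :=
      hφ.const_mul _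
    exact h1.congr_fun (fun s hs => (heq s hs).symm) measurableSet_Ioc
  constructor
  · rw [← himg]
    exact (integrableOn_image_iff_integrableOn_abs_deriv_smul measurableSet_Ioc hders hinj
      (fun y => I y / y ^ 2)).2 hintR
  · rw [← himg,
      integral_image_eq_integral_abs_deriv_smul measurableSet_Ioc hders hinj
        (fun y => I y / y ^ 2),
      MeasureTheory.setIntegral_congr_fun measurableSet_Ioc heq,
      MeasureTheory.integral_const_mul]

/-- Divergence of the Riccati-coefficient integral: if `gₙ(s) ≥ A₁/(1+A₂Bs)`
on `[0,Tₙ]` with `Tₙ → ∞`, and `I ≥ 0` is increasing on `(0,∞)` with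
`∫₀^δ I(y)/y² dy = +∞` (formalized as non-integrability of the nonnegative
integrand), then `∫₀^{Tₙ} I(gₙ(s)) ds → +∞`. -/
theorem stmt17 (A₁ A₂ B : ℝ) (hA₁ : 0 < A₁) (hA₂ : 0 < A₂) (hB : 0 < B)
    (g : ℕ → ℝ → ℝ) (T : ℕ → ℝ)
    (hTpos : ∀ n, 0 < T n)
    (hT : Filter.Tendsto T Filter.atTop Filter.atTop)
    (hg : ∀ n, ∀ s ∈ Set.Icc (0:ℝ) (T n), A₁ / (1 + A₂ * B * s) ≤ g n s)
    (I : ℝ → ℝ) (hInn : ∀ y, 0 ≤ I y) (hImono : MonotoneOn I (Set.Ioi 0))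
    (hIdiv : ∃ δ : ℝ, 0 < δ ∧
      ¬ MeasureTheory.IntegrableOn (fun y : ℝ => I y / y ^ 2) (Set.Ioc 0 δ))
    (hint : ∀ n, IntervalIntegrable (fun s => I (g n s))
      MeasureTheory.volume 0 (T n)) :
    Filter.Tendsto (fun n => ∫ s in (0:ℝ)..(T n), I (g n s))
      Filter.atTop Filter.atTop := by
  obtain ⟨δ, hδ, hIδ⟩ := hIdiv
  have hc : 0 < A₂ * B := mul_pos hA₂ hB
  set c : ℝ := A₂ * B with hc_def
  set f : ℝ → ℝ := fun s => A₁ / (1 + c * s) with hf_def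
  have hden : ∀ s : ℝ, 0 ≤ s → 0 < 1 + c * s := fun s hs => by nlinarith
  have hfpos : ∀ s : ℝ, 0 ≤ s → 0 < f s := fun s hs => div_pos hA₁ (hden s hs)
  have hfanti : AntitoneOn (fun s => I (f s)) (Set.Ici 0) := by
    intro s hs t ht hst
    have h1 := hden s hs
    have h2 := hden t ht
    have hmul : c * s ≤ c * t := mul_le_mul_of_nonneg_left hst hc.le
    have hf_le : f t ≤ f s := by
      simp only [hf_def]
      gcongr
    exact hImono (hfpos t ht) (hfpos s hs) hf_le
  have hφint : ∀ u v : ℝ, 0 ≤ u → 0 ≤ v →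
      IntervalIntegrable (fun s => I (f s)) volume u v := by
    intro u v hu hv
    refine (hfanti.mono ?_).intervalIntegrable
    intro x hx
    exact le_trans (le_min hu hv) hx.1
  set F : ℝ → ℝ := fun t => ∫ s in (0:ℝ)..t, I (f s) with hF_def
  have hclaim : ∀ M : ℝ, ∃ T₀ : ℝ, 0 < T₀ ∧ M ≤ F T₀ := by
    by_contra hcon
    push_neg at hcon
    obtain ⟨M, hM⟩ := hcon
    set b : ℝ := min δ A₁ / 2 with hb_def
    have hb0 : 0 < b := by
      have := lt_min hδ hA₁
      simp only [hb_def]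
      linarith
    have hbδ : b < δ := by
      have := min_le_left δ A₁
      simp only [hb_def]; linarith
    have hbA : b < A₁ := by
      have := min_le_right δ A₁
      simp only [hb_def]; linarith
    have key : ∀ ε : ℝ, 0 < ε → ε < A₁ →
        MeasureTheory.IntegrableOn (fun y => I y / y ^ 2) (Set.Ico ε A₁) ∧
        ∫ y in Set.Ico ε A₁, I y / y ^ 2 ≤ (c / A₁) * M := by
      intro ε hε hεA
      set T₀ : ℝ := (A₁ / ε - 1) / c with hT₀_def
      have h1ε : 1 < A₁ / ε := (one_lt_div hε).2 hεA
      have hT₀ : 0 < T₀ := div_pos (by linarith) hc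
      have hfT₀ : A₁ / (1 + c * T₀) = ε := by
        have h1 : 1 + c * ((A₁ / ε - 1) / c) = A₁ / ε := by field_simp; ring
        simp only [hT₀_def, h1]
        rw [div_div_eq_mul_div, mul_comm, mul_div_assoc, div_self hA₁.ne', mul_one]
      have hφ : MeasureTheory.IntegrableOn (fun s => I (A₁ / (1 + c * s)))
          (Set.Ioc 0 T₀) := (hφint 0 T₀ le_rfl hT₀.le).1
      obtain ⟨hInt, hEq⟩ := aux_cov A₁ c hA₁ hc I T₀ hT₀ hφ
      rw [hfT₀] at hInt hEq
      refine ⟨hInt, ?_⟩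
      rw [hEq]
      have hF0 : ∫ s in Set.Ioc (0:ℝ) T₀, I (A₁ / (1 + c * s)) = F T₀ :=
        (intervalIntegral.integral_of_le hT₀.le).symm
      rw [hF0]
      exact mul_le_mul_of_nonneg_left (hM T₀ hT₀).le (by positivity)
    have hIb : MeasureTheory.IntegrableOn (fun y => I y / y ^ 2) (Set.Ioc 0 b) := by
      have hapos : ∀ n : ℕ, 0 < b / (n + 1 : ℝ) := fun n => by positivity
      have haleb : ∀ n : ℕ, b / (n + 1 : ℝ) ≤ b := fun n => by
        apply div_le_self hb0.le
        have : (0:ℝ) ≤ (n:ℝ) := Nat.cast_nonneg n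
        linarith
      have haA : ∀ n : ℕ, b / (n + 1 : ℝ) < A₁ := fun n => lt_of_le_of_lt (haleb n) hbA
      have htend : Filter.Tendsto (fun n : ℕ => b / (n + 1 : ℝ)) Filter.atTop (𝓝 0) := by
        have h2 := (tendsto_const_div_atTop_nhds_zero_nat b).comp
          (tendsto_add_atTop_nat 1)
        refine h2.congr fun n => ?_
        simp only [Function.comp_apply]
        push_cast
        ring
      have hfi : ∀ n : ℕ, MeasureTheory.IntegrableOn (fun y => I y / y ^ 2)
          (Set.Ioc (b / (n + 1 : ℝ)) b) := fun n =>
        (key _ (hapos n) (haA n)).1.mono_set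
          (fun x hx => ⟨hx.1.le, lt_of_le_of_lt hx.2 hbA⟩)
      refine integrableOn_Ioc_of_intervalIntegral_norm_bounded_left
        (I := (c / A₁) * M) hfi htend (Filter.Eventually.of_forall fun n => ?_)
      have hnorm : (fun x : ℝ => ‖I x / x ^ 2‖) = fun x => I x / x ^ 2 :=
        funext fun x => Real.norm_of_nonneg (div_nonneg (hInn x) (sq_nonneg x))
      rw [hnorm]
      refine le_trans (MeasureTheory.setIntegral_mono_set (key _ (hapos n) (haA n)).1
        (Filter.Eventually.of_forall fun x => div_nonneg (hInn x) (sq_nonneg x))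
        (HasSubset.Subset.eventuallyLE
          (fun x hx => ⟨hx.1.le, lt_of_le_of_lt hx.2 hbA⟩)))
        (key _ (hapos n) (haA n)).2
    have hmid : MeasureTheory.IntegrableOn (fun y => I y / y ^ 2) (Set.Ioc b δ) := by
      have hsub : Set.uIcc b δ ⊆ Set.Ioi 0 := by
        rw [Set.uIcc_of_le hbδ.le]
        exact fun x hx => lt_of_lt_of_le hb0 hx.1
      have h1 : IntervalIntegrable I volume b δ := (hImono.mono hsub).intervalIntegrable
      have h2 : IntervalIntegrable (fun y => I y * ((y ^ 2)⁻¹)) volume b δ := by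
        refine h1.mul_continuousOn ?_
        refine ((continuous_pow 2).continuousOn).inv₀ ?_
        intro x hx
        exact pow_ne_zero 2 (ne_of_gt (hsub hx))
      have h3 := h2.1
      simpa [div_eq_mul_inv] using h3
    have : MeasureTheory.IntegrableOn (fun y => I y / y ^ 2) (Set.Ioc 0 δ) := by
      have h := hIb.union hmid
      rwa [Set.Ioc_union_Ioc_eq_Ioc hb0.le hbδ.le] at h
    exact hIδ this
  have hFmono : ∀ u v : ℝ, 0 ≤ u → u ≤ v → F u ≤ F v := by
    intro u v hu huv
    have h1 := hφint 0 u le_rfl hu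
    have h2 := hφint u v hu (hu.trans huv)
    have hadd := intervalIntegral.integral_add_adjacent_intervals h1 h2
    have hnn : 0 ≤ ∫ s in u..v, I (f s) :=
      intervalIntegral.integral_nonneg huv fun x _ => hInn _
    simp only [hF_def]
    linarith [hadd]
  have hFtend : Filter.Tendsto F Filter.atTop Filter.atTop := by
    rw [tendsto_atTop]
    intro M
    obtain ⟨T₀, hT₀, hMT₀⟩ := hclaim M
    filter_upwards [eventually_ge_atTop T₀] with t ht
    exact hMT₀.trans (hFmono T₀ t hT₀.le ht)
  have hcomp : Filter.Tendsto (fun n => F (T n)) Filter.atTop Filter.atTop := hFtend.comp hT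
  refine tendsto_atTop_mono (fun n => ?_) hcomp
  refine intervalIntegral.integral_mono_on (hTpos n).le
    (hφint 0 (T n) le_rfl (hTpos n).le) (hint n) ?_
  intro s hs
  exact hImono (hfpos s hs.1) (lt_of_lt_of_le (hfpos s hs.1) (hg n s hs)) (hg n s hs)
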